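/- arXiv:1807.00391 — 4 statements merged into one kernel-verified Lean document; each statement's English description precedes it below -/
import Mathlib

section
/- Let N ≥ 1, let m be a positive divisor of N, let (A, B; C, D) ∈ SL₂(ℤ), and set N' = N/gcd(CD, N) and m' = m/gcd(BC, m). Let μ, ν ∈ ℤ be coprime to N with μ ≡ ν ≡ 1 (mod N'), and let μ*, ν*, (μν)* ∈ ℤ be inverses of μ, ν, μν modulo N. Then: (i) gcd(AD − μ*BC, N) = 1; (ii) AD − (μν)*BC ≡ (AD − μ*BC)(AD − ν*BC) (mod m); (iii) if moreover μ ≡ ν (mod m'), then AD − μ*BC ≡ AD − ν*BC (mod m). -/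
/-- Let `N ≥ 1`, `m` a positive divisor of `N`, `(A,B;C,D) ∈ SL₂(ℤ)`,
`N' = N/gcd(CD,N)`, `m' = m/gcd(BC,m)`. Let `μ, ν` be coprime to `N` with
`μ ≡ ν ≡ 1 (mod N')`, and `μ*, ν*, (μν)*` inverses of `μ, ν, μν` modulo `N`. Then
(i) `gcd(AD − μ*BC, N) = 1`;
(ii) `AD − (μν)*BC ≡ (AD − μ*BC)(AD − ν*BC) (mod m)`;
(iii) if `μ ≡ ν (mod m')` then `AD − μ*BC ≡ AD − ν*BC (mod m)`. -/
theorem stmt_7 (N m : ℤ) (hN : 1 ≤ N) (hm : 0 < m) (hmN : m ∣ N)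
    (A B C D : ℤ) (hdet : A * D - B * C = 1)
    (N' m' : ℤ)
    (hN' : N' = N / (Int.gcd (C * D) N : ℤ))
    (hm' : m' = m / (Int.gcd (B * C) m : ℤ))
    (μ ν μs νs μνs : ℤ)
    (hμ : IsCoprime μ N) (hν : IsCoprime ν N)
    (hμ1 : μ ≡ 1 [ZMOD N']) (hν1 : ν ≡ 1 [ZMOD N'])
    (hμs : μ * μs ≡ 1 [ZMOD N]) (hνs : ν * νs ≡ 1 [ZMOD N])
    (hμνs : μ * ν * μνs ≡ 1 [ZMOD N]) :
    Int.gcd (A * D - μs * B * C) N = 1 ∧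
    A * D - μνs * B * C ≡ (A * D - μs * B * C) * (A * D - νs * B * C) [ZMOD m] ∧
    (μ ≡ ν [ZMOD m'] → A * D - μs * B * C ≡ A * D - νs * B * C [ZMOD m]) := by
  have hgN : ((Int.gcd (C * D) N : ℤ)) ∣ N := Int.gcd_dvd_right _ _
  have hgCD : ((Int.gcd (C * D) N : ℤ)) ∣ C * D := Int.gcd_dvd_left _ _
  have hNg : N' * (Int.gcd (C * D) N : ℤ) = N := by
    rw [hN']; exact Int.ediv_mul_cancel hgN
  have hN'N : N' ∣ N := ⟨_, hNg.symm⟩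
  -- key: if x ≡ 1 mod N', then N ∣ (1 - x) * (C * D)
  have key : ∀ x : ℤ, x ≡ 1 [ZMOD N'] → N ∣ (1 - x) * (C * D) := by
    intro x hx
    obtain ⟨k, hk⟩ := hx.dvd
    obtain ⟨c, hc⟩ := hgCD
    exact ⟨k * c, by rw [hk, hc]; linear_combination (k * c) * hNg⟩
  have hμs1 : μs ≡ 1 [ZMOD N'] := by
    have h := hμs.of_dvd hN'N
    calc μs = 1 * μs := (one_mul μs).symm
      _ ≡ μ * μs [ZMOD N'] := hμ1.symm.mul_right μs
      _ ≡ 1 [ZMOD N'] := h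
  have dμs : N ∣ (1 - μs) * (C * D) := key μs hμs1
  have dμ : N ∣ (1 - μ) * (C * D) := key μ hμ1
  -- core multiplicativity computation
  have core : ∀ s t : ℤ, N ∣ s * (C * D) →
      (1 + s * (B * C)) * (1 + t * (B * C)) ≡ 1 + (s + t - s * t) * (B * C) [ZMOD N] := by
    intro s t hs
    have h : (1 + s * (B * C)) * (1 + t * (B * C)) - (1 + (s + t - s * t) * (B * C))
        = (s * (C * D)) * (t * (A * B)) := by linear_combination (-(s * t * (B * C))) * hdet
    have hd : N ∣ (1 + s * (B * C)) * (1 + t * (B * C)) - (1 + (s + t - s * t) * (B * C)) :=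
      h ▸ hs.mul_right _
    exact (Int.modEq_iff_dvd.mpr hd).symm
  have eμ : A * D - μs * B * C = 1 + (1 - μs) * (B * C) := by linear_combination hdet
  have eν : A * D - νs * B * C = 1 + (1 - νs) * (B * C) := by linear_combination hdet
  have eμν : A * D - μνs * B * C = 1 + (1 - μνs) * (B * C) := by linear_combination hdet
  -- Part (i)
  have h1 := core (1 - μs) (1 - μ) dμs
  have h2 : (1 : ℤ) + ((1 - μs) + (1 - μ) - (1 - μs) * (1 - μ)) * (B * C) ≡ 1 [ZMOD N] := by
    obtain ⟨k, hk⟩ := hμs.dvd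
    exact Int.modEq_iff_dvd.mpr ⟨-(k * (B * C)), by linear_combination (-(B * C)) * hk⟩
  have hXY : (A * D - μs * B * C) * (1 + (1 - μ) * (B * C)) ≡ 1 [ZMOD N] := by
    rw [eμ]; exact h1.trans h2
  obtain ⟨k, hk⟩ := hXY.dvd
  have hco : IsCoprime (A * D - μs * B * C) N :=
    ⟨1 + (1 - μ) * (B * C), k, by linear_combination -hk⟩
  refine ⟨Int.isCoprime_iff_gcd_eq_one.mp hco, ?_, ?_⟩
  · -- Part (ii)
    have h3 := core (1 - μs) (1 - νs) dμs
    have hinv : μs * νs ≡ μνs [ZMOD N] := by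
      calc μs * νs = μs * νs * 1 := (mul_one _).symm
        _ ≡ μs * νs * (μ * ν * μνs) [ZMOD N] := hμνs.symm.mul_left (μs * νs)
        _ = (μ * μs) * ((ν * νs) * μνs) := by ring
        _ ≡ 1 * (1 * μνs) [ZMOD N] := hμs.mul (hνs.mul Int.ModEq.rfl)
        _ = μνs := by ring
    have h4 : (1 : ℤ) + ((1 - μs) + (1 - νs) - (1 - μs) * (1 - νs)) * (B * C)
        ≡ 1 + (1 - μνs) * (B * C) [ZMOD N] := by
      obtain ⟨k2, hk2⟩ := hinv.dvd
      exact Int.modEq_iff_dvd.mpr ⟨-(k2 * (B * C)), by linear_combination (-(B * C)) * hk2⟩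
    have hN2 : A * D - μνs * B * C ≡ (A * D - μs * B * C) * (A * D - νs * B * C) [ZMOD N] := by
      rw [eμ, eν, eμν]
      exact (h3.trans h4).symm
    exact Int.ModEq.of_dvd hmN hN2
  · -- Part (iii)
    intro hμν
    have hgm : ((Int.gcd (B * C) m : ℤ)) ∣ m := Int.gcd_dvd_right _ _
    have hgBC : ((Int.gcd (B * C) m : ℤ)) ∣ B * C := Int.gcd_dvd_left _ _
    have hmg : m' * (Int.gcd (B * C) m : ℤ) = m := by
      rw [hm']; exact Int.ediv_mul_cancel hgm
    have keym : m ∣ (ν - μ) * (B * C) := by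
      obtain ⟨k1, hk1⟩ := hμν.dvd
      obtain ⟨c, hc⟩ := hgBC
      exact ⟨k1 * c, by rw [hk1, hc]; linear_combination (k1 * c) * hmg⟩
    have h5 : m ∣ μ * ν * (νs - μs) - (μ - ν) := by
      obtain ⟨k1, hk1⟩ := hμs.dvd
      obtain ⟨k2, hk2⟩ := hνs.dvd
      exact hmN.trans ⟨-μ * k2 + ν * k1, by linear_combination (-μ) * hk2 + ν * hk1⟩
    have h6 : m ∣ (μ * ν) * ((νs - μs) * (B * C)) := by
      have h := dvd_sub (h5.mul_right (B * C)) keym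
      have e : μ * ν * ((νs - μs) * (B * C)) = (μ * ν * (νs - μs) - (μ - ν)) * (B * C) - (ν - μ) * (B * C) := by ring
      rw [e]; exact h
    have hμm : IsCoprime μ m := hμ.of_isCoprime_of_dvd_right hmN
    have hνm : IsCoprime ν m := hν.of_isCoprime_of_dvd_right hmN
    have hcopm : IsCoprime m (μ * ν) := (hμm.mul_left hνm).symm
    have h7 : m ∣ (νs - μs) * (B * C) := hcopm.dvd_of_dvd_mul_left h6
    obtain ⟨k3, hk3⟩ := h7
    exact Int.modEq_iff_dvd.mpr ⟨-k3, by linear_combination -hk3⟩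
end

section
/- Let N ≥ 1, let m be a positive divisor of N, and let (A, B; C, D) ∈ SL₂(ℤ). For an integer n ≥ 1 let n_C denote the largest divisor of n all of whose prime factors divide C (with n_C = n if C = 0), and n_{C̄} = n/n_C. For u ∈ ℤ set M_u = lcm( N/gcd(C(uC+D), N), m/gcd(C(uA+B), m) ), and set M' = (N_C/gcd(C, N)) · m_{C̄}. Then: (i) M' divides M_u for every u ∈ ℤ; (ii) there exists u ∈ ℤ such that N/N_C divides uC + D, and for every such u one has M_u = M'. -/
/-- `cPart q n` is the largest divisor of `n` all of whose prime factors divide `q`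
(equal to `n` when `q = 0`, since every prime divides `0`). -/
def cPart (q n : ℕ) : ℕ :=
  ∏ p ∈ n.primeFactors.filter (fun p => p ∣ q), p ^ n.factorization p

lemma cPart_pos (q n : ℕ) : 0 < cPart q n := by
  apply Finset.prod_pos
  intro p hp
  simp only [Finset.mem_filter, Nat.mem_primeFactors] at hp
  exact pow_pos hp.1.1.pos _

lemma cPart_dvd (q n : ℕ) (hn : n ≠ 0) : cPart q n ∣ n := by
  conv_rhs => rw [← Nat.factorization_prod_pow_eq_self hn]
  exact Finset.prod_dvd_prod_of_subset _ _ _ (Finset.filter_subset _ _)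

lemma cPart_zero (n : ℕ) (hn : n ≠ 0) : cPart 0 n = n := by
  unfold cPart
  rw [Finset.filter_true_of_mem (fun p _ => dvd_zero p)]
  exact Nat.factorization_prod_pow_eq_self hn

lemma cPart_factorization (q n p : ℕ) :
    (cPart q n).factorization p = if p ∣ q then n.factorization p else 0 := by
  unfold cPart
  rw [Nat.factorization_prod (fun r hr => ?_)]
  · rw [Finsupp.finset_sum_apply]
    have : ∀ r ∈ n.primeFactors.filter (fun p => p ∣ q),
        (r ^ n.factorization r).factorization p = if r = p then n.factorization p else 0 := by
      intro r hr
      simp only [Finset.mem_filter, Nat.mem_primeFactors] at hr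
      rw [hr.1.1.factorization_pow, Finsupp.single_apply]
      split <;> simp_all
    rw [Finset.sum_congr rfl this, Finset.sum_ite_eq' _ p]
    by_cases hq : p ∣ q
    · by_cases hmem : p ∈ n.primeFactors
      · simp [hmem, hq]
      · have : n.factorization p = 0 := by
          rw [← Nat.support_factorization] at hmem
          exact Finsupp.notMem_support_iff.mp hmem
        simp [this]
    · simp [hq]
  · simp only [Finset.mem_filter, Nat.mem_primeFactors] at hr
    exact pow_ne_zero _ hr.1.1.pos.ne'

lemma dvd_of_fact_le (a b : ℕ) (ha : a ≠ 0) (hb : b ≠ 0)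
    (h : ∀ p, p.Prime → a.factorization p ≤ b.factorization p) : a ∣ b := by
  rw [← Nat.factorization_le_iff_dvd ha hb, Finsupp.le_def]
  intro p
  by_cases hp : p.Prime
  · exact h p hp
  · simp [Nat.factorization_eq_zero_of_not_prime _ hp]

lemma gcd_fact (x : ℤ) (n : ℕ) (hx : x ≠ 0) (hn : n ≠ 0) (p : ℕ) :
    (Int.gcd x (n : ℤ)).factorization p
      = min (x.natAbs.factorization p) (n.factorization p) := by
  have : Int.gcd x (n : ℤ) = Nat.gcd x.natAbs n := by simp [Int.gcd]
  rw [this, Nat.factorization_gcd (Int.natAbs_ne_zero.mpr hx) hn]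
  simp [Finsupp.inf_apply]

lemma div_fact (d n : ℕ) (h : d ∣ n) (p : ℕ) :
    (n / d).factorization p = n.factorization p - d.factorization p := by
  rw [Nat.factorization_div h]; simp

lemma lcm_fact (a b : ℕ) (ha : a ≠ 0) (hb : b ≠ 0) (p : ℕ) :
    (Nat.lcm a b).factorization p = max (a.factorization p) (b.factorization p) := by
  rw [Nat.factorization_lcm ha hb]; simp [Finsupp.sup_apply]

lemma prime_dvd_iff (p n : ℕ) (hp : p.Prime) (hn : n ≠ 0) :
    p ∣ n ↔ 1 ≤ n.factorization p := by
  rw [← hp.pow_dvd_iff_le_factorization hn, pow_one]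

lemma int_dvd_natAbs (p : ℕ) (x : ℤ) : p ∣ x.natAbs ↔ (p : ℤ) ∣ x := by
  rw [← Int.natAbs_dvd_natAbs, Int.natAbs_natCast]

/-- Let `m` be a positive divisor of `N ≥ 1` and `(A,B;C,D) ∈ SL₂(ℤ)`.
For `u ∈ ℤ` set `M_u = lcm(N/gcd(C(uC+D),N), m/gcd(C(uA+B),m))`, and set
`M' = (N_C/gcd(C,N))·m_{C̄}` where `n_C` is the largest divisor of `n` whose prime factors
divide `C` and `n_{C̄} = n/n_C`. Then (i) `M' ∣ M_u` for all `u`; (ii) there is `u` with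
`N/N_C ∣ uC+D`, and every such `u` has `M_u = M'`. -/
theorem stmt_13 (N m : ℕ) (hN : 1 ≤ N) (hmpos : 0 < m) (hmdvd : m ∣ N)
    (A B C D : ℤ) (hdet : A * D - B * C = 1)
    (Mu : ℤ → ℕ)
    (hMu : ∀ u : ℤ, Mu u =
      Nat.lcm (N / Int.gcd (C * (u * C + D)) N) (m / Int.gcd (C * (u * A + B)) m))
    (M' : ℕ)
    (hM' : M' = (cPart C.natAbs N / Int.gcd C N) * (m / cPart C.natAbs m)) :
    (∀ u : ℤ, M' ∣ Mu u) ∧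
    (∃ u : ℤ, ((N / cPart C.natAbs N : ℕ) : ℤ) ∣ (u * C + D)) ∧
    (∀ u : ℤ, ((N / cPart C.natAbs N : ℕ) : ℤ) ∣ (u * C + D) → Mu u = M') := by
  have hN0 : N ≠ 0 := by omega
  have hm0 : m ≠ 0 := hmpos.ne'
  by_cases hC : C = 0
  · subst hC
    simp only [Int.natAbs_zero] at hM' ⊢
    rw [cPart_zero N hN0, cPart_zero m hm0] at hM'
    have hg : Int.gcd 0 (N : ℤ) = N := by rw [Int.gcd_zero_left, Int.natAbs_natCast]
    have hgm : Int.gcd 0 (m : ℤ) = m := by rw [Int.gcd_zero_left, Int.natAbs_natCast]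
    have hM'1 : M' = 1 := by
      rw [hM', hg, Nat.div_self (by omega), Nat.div_self hmpos]
    have hMu1 : ∀ u, Mu u = 1 := by
      intro u
      rw [hMu u]
      simp only [zero_mul, hg, hgm, Nat.div_self (show 0 < N by omega), Nat.div_self hmpos]
      rfl
    refine ⟨fun u => by rw [hMu1, hM'1], ⟨0, ?_⟩, fun u _ => by rw [hMu1, hM'1]⟩
    rw [cPart_zero N hN0, Nat.div_self (by omega)]
    exact one_dvd _
  · -- C ≠ 0
    have hc0 : C.natAbs ≠ 0 := Int.natAbs_ne_zero.mpr hC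
    set c := C.natAbs with hcdef
    have hba : ∀ p : ℕ, m.factorization p ≤ N.factorization p := fun p =>
      Finsupp.le_def.mp ((Nat.factorization_le_iff_dvd hm0 hN0).mpr hmdvd) p
    have hcopCD : IsCoprime C D := ⟨-B, A, by linarith⟩
    have hcop2 : ∀ u : ℤ, IsCoprime (u*C+D) (u*A+B) := fun u =>
      ⟨A, -C, by linear_combination hdet⟩
    have hkey1 : ∀ (p : ℕ), p.Prime → p ∣ c → ∀ u : ℤ, ¬ (p:ℤ) ∣ (u*C+D) := by
      intro p hp hpc u hdvd
      have h1 : (p:ℤ) ∣ C := (int_dvd_natAbs p C).mp hpc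
      have h2 : (p:ℤ) ∣ D := by
        have hD : D = (u*C+D) - u*C := by ring
        rw [hD]
        exact dvd_sub hdvd (h1.mul_left u)
      have h3 := Int.isUnit_iff.mp (hcopCD.isUnit_of_dvd' h1 h2)
      have h4 := hp.two_le
      omega
    have hvmul : ∀ x : ℤ, x ≠ 0 → ∀ p : ℕ,
        ((C*x).natAbs).factorization p = c.factorization p + (x.natAbs).factorization p := by
      intro x hx p
      rw [Int.natAbs_mul, Nat.factorization_mul hc0 (Int.natAbs_ne_zero.mpr hx),
        Finsupp.add_apply]
    have hNCdvd : cPart c N ∣ N := cPart_dvd c N hN0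
    have hNCpos : 0 < cPart c N := cPart_pos c N
    have hmCdvd : cPart c m ∣ m := cPart_dvd c m hm0
    have hmCpos : 0 < cPart c m := cPart_pos c m
    have hg0ne : Int.gcd C (N:ℤ) ≠ 0 := by
      intro h
      exact hC (Int.gcd_eq_zero_iff.mp h).1
    have hg0dvdNC : Int.gcd C (N:ℤ) ∣ cPart c N := by
      apply dvd_of_fact_le _ _ hg0ne hNCpos.ne'
      intro p hp
      rw [gcd_fact C N hC hN0 p, cPart_factorization]
      by_cases hpc : p ∣ c
      · simp only [hpc, if_true]
        exact min_le_right _ _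
      · have hcc : c.factorization p = 0 := Nat.factorization_eq_zero_of_not_dvd hpc
        simp [hpc, hcc, show C.natAbs.factorization p = 0 from hcc]
    have hn1ne : cPart c N / Int.gcd C (N:ℤ) ≠ 0 :=
      (Nat.div_pos (Nat.le_of_dvd hNCpos hg0dvdNC) (Nat.pos_of_ne_zero hg0ne)).ne'
    have hn2ne : m / cPart c m ≠ 0 :=
      (Nat.div_pos (Nat.le_of_dvd hmpos hmCdvd) hmCpos).ne'
    have hM'ne : M' ≠ 0 := by
      rw [hM']
      exact Nat.mul_ne_zero hn1ne hn2ne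
    have vM' : ∀ p : ℕ, p.Prime → M'.factorization p =
        (if p ∣ c then N.factorization p - min (c.factorization p) (N.factorization p)
         else m.factorization p) := by
      intro p hp
      have e1 : (cPart c N / Int.gcd C (N:ℤ)).factorization p
          = (if p ∣ c then N.factorization p else 0)
            - min (c.factorization p) (N.factorization p) := by
        rw [div_fact _ _ hg0dvdNC p, cPart_factorization, gcd_fact C N hC hN0 p]
      have e2 : (m / cPart c m).factorization p
          = m.factorization p - (if p ∣ c then m.factorization p else 0) := by
        rw [div_fact _ _ hmCdvd p, cPart_factorization]
      rw [hM', Nat.factorization_mul hn1ne hn2ne, Finsupp.add_apply, e1, e2]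
      by_cases hpc : p ∣ c
      · simp only [hpc, if_true]
        omega
      · have hcc : c.factorization p = 0 := Nat.factorization_eq_zero_of_not_dvd hpc
        simp only [hpc, if_false]
        omega
    have part1 : ∀ u : ℤ, M' ∣ Mu u := by
      intro u
      rw [hMu u]
      have hg1dvd : Int.gcd (C * (u * C + D)) (N:ℤ) ∣ N :=
        Int.natCast_dvd_natCast.mp (Int.gcd_dvd_right _ _)
      have hg1pos : 0 < Int.gcd (C * (u * C + D)) (N:ℤ) :=
        Nat.pos_of_ne_zero (fun h => hN0 (by
          have := (Int.gcd_eq_zero_iff.mp h).2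
          exact_mod_cast Int.natCast_eq_zero.mp this))
      have hg2dvd : Int.gcd (C * (u * A + B)) (m:ℤ) ∣ m :=
        Int.natCast_dvd_natCast.mp (Int.gcd_dvd_right _ _)
      have hg2pos : 0 < Int.gcd (C * (u * A + B)) (m:ℤ) :=
        Nat.pos_of_ne_zero (fun h => hm0 (by
          have := (Int.gcd_eq_zero_iff.mp h).2
          exact_mod_cast Int.natCast_eq_zero.mp this))
      have hd1ne : N / Int.gcd (C * (u * C + D)) (N:ℤ) ≠ 0 :=
        (Nat.div_pos (Nat.le_of_dvd (by omega) hg1dvd) hg1pos).ne'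
      have hd2ne : m / Int.gcd (C * (u * A + B)) (m:ℤ) ≠ 0 :=
        (Nat.div_pos (Nat.le_of_dvd hmpos hg2dvd) hg2pos).ne'
      apply dvd_of_fact_le _ _ hM'ne (Nat.lcm_ne_zero hd1ne hd2ne)
      intro p hp
      rw [lcm_fact _ _ hd1ne hd2ne p, div_fact _ _ hg1dvd p, div_fact _ _ hg2dvd p,
        vM' p hp]
      by_cases hpc : p ∣ c
      · have hnd : ¬ (p:ℤ) ∣ (u*C+D) := hkey1 p hp hpc u
        have hund : u*C+D ≠ 0 := fun h => hnd (h ▸ dvd_zero _)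
        have hx1ne : C * (u*C+D) ≠ 0 := mul_ne_zero hC hund
        have hv0 : ((u*C+D).natAbs).factorization p = 0 :=
          Nat.factorization_eq_zero_of_not_dvd (fun hd => hnd ((int_dvd_natAbs p _).mp hd))
        have hw1 : (Int.gcd (C * (u*C+D)) (N:ℤ)).factorization p
            = min (c.factorization p) (N.factorization p) := by
          rw [gcd_fact _ N hx1ne hN0 p, hvmul _ hund p, hv0]
          simp
        rw [hw1]
        simp only [hpc, if_true]
        exact le_max_left _ _
      · have hcc : c.factorization p = 0 := Nat.factorization_eq_zero_of_not_dvd hpc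
        simp only [hpc, if_false]
        by_cases h1 : (p:ℤ) ∣ (u*C+D)
        · have hpndC : ¬ (p:ℤ) ∣ C := fun h => hpc ((int_dvd_natAbs p C).mpr h)
          have hAB : ¬ (p:ℤ) ∣ (u*A+B) := by
            intro h
            have h3 := Int.isUnit_iff.mp ((hcop2 u).isUnit_of_dvd' h1 h)
            have h4 := hp.two_le
            omega
          have hABne : u*A+B ≠ 0 := by
            intro h
            have hone : A * (u*C+D) = 1 := by linear_combination hdet + C*h
            have hdd : (u*C+D) ∣ 1 := ⟨A, by linear_combination -hone⟩
            have h3 := Int.isUnit_iff.mp (isUnit_of_dvd_one (h1.trans hdd))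
            have h4 := hp.two_le
            omega
          have hx2ne : C * (u*A+B) ≠ 0 := mul_ne_zero hC hABne
          have hpnd2 : ¬ p ∣ (C * (u*A+B)).natAbs := by
            rw [int_dvd_natAbs]
            intro h
            rcases (Nat.prime_iff_prime_int.mp hp).dvd_mul.mp h with h' | h'
            · exact hpndC h'
            · exact hAB h'
          have hw2 : (Int.gcd (C * (u*A+B)) (m:ℤ)).factorization p = 0 := by
            rw [gcd_fact _ m hx2ne hm0 p, Nat.factorization_eq_zero_of_not_dvd hpnd2]
            simp
          rw [hw2]
          omega
        · have hund : u*C+D ≠ 0 := fun h => h1 (h ▸ dvd_zero _)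
          have hx1ne : C * (u*C+D) ≠ 0 := mul_ne_zero hC hund
          have hv0 : ((u*C+D).natAbs).factorization p = 0 :=
            Nat.factorization_eq_zero_of_not_dvd (fun hd => h1 ((int_dvd_natAbs p _).mp hd))
          have hw1 : (Int.gcd (C * (u*C+D)) (N:ℤ)).factorization p = 0 := by
            rw [gcd_fact _ N hx1ne hN0 p, hvmul _ hund p, hv0, hcc]
            simp
          rw [hw1]
          have := hba p
          omega
    have hNbarne : N / cPart c N ≠ 0 :=
      (Nat.div_pos (Nat.le_of_dvd (by omega) hNCdvd) hNCpos).ne'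
    have hNbarfact : ∀ p : ℕ, (N / cPart c N).factorization p
        = N.factorization p - (if p ∣ c then N.factorization p else 0) := by
      intro p
      rw [div_fact _ _ hNCdvd p, cPart_factorization]
    have hcop : Nat.Coprime c (N / cPart c N) := by
      rw [Nat.coprime_iff_gcd_eq_one]
      by_contra hne
      obtain ⟨p, hp, hpd⟩ := Nat.exists_prime_and_dvd hne
      have h1 : p ∣ c := hpd.trans (Nat.gcd_dvd_left _ _)
      have h2 : p ∣ N / cPart c N := hpd.trans (Nat.gcd_dvd_right _ _)
      have h3 := (prime_dvd_iff p _ hp hNbarne).mp h2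
      rw [hNbarfact p] at h3
      simp [h1] at h3
    have hex : ∃ u : ℤ, ((N / cPart c N : ℕ) : ℤ) ∣ (u * C + D) := by
      have hic : IsCoprime C ((N / cPart c N : ℕ) : ℤ) := by
        rw [Int.isCoprime_iff_gcd_eq_one]
        exact hcop
      obtain ⟨x, y, hxy⟩ := hic
      exact ⟨-D*x, ⟨D*y, by linear_combination (-D)*hxy⟩⟩
    refine ⟨part1, hex, ?_⟩
    intro u hu
    refine Nat.dvd_antisymm ?_ (part1 u)
    rw [hMu u]
    have hg1dvd : Int.gcd (C * (u * C + D)) (N:ℤ) ∣ N :=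
      Int.natCast_dvd_natCast.mp (Int.gcd_dvd_right _ _)
    have hg1pos : 0 < Int.gcd (C * (u * C + D)) (N:ℤ) :=
      Nat.pos_of_ne_zero (fun h => hN0 (by
        have := (Int.gcd_eq_zero_iff.mp h).2
        exact_mod_cast Int.natCast_eq_zero.mp this))
    have hg2dvd : Int.gcd (C * (u * A + B)) (m:ℤ) ∣ m :=
      Int.natCast_dvd_natCast.mp (Int.gcd_dvd_right _ _)
    have hg2pos : 0 < Int.gcd (C * (u * A + B)) (m:ℤ) :=
      Nat.pos_of_ne_zero (fun h => hm0 (by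
        have := (Int.gcd_eq_zero_iff.mp h).2
        exact_mod_cast Int.natCast_eq_zero.mp this))
    have hd1ne : N / Int.gcd (C * (u * C + D)) (N:ℤ) ≠ 0 :=
      (Nat.div_pos (Nat.le_of_dvd (by omega) hg1dvd) hg1pos).ne'
    have hd2ne : m / Int.gcd (C * (u * A + B)) (m:ℤ) ≠ 0 :=
      (Nat.div_pos (Nat.le_of_dvd hmpos hg2dvd) hg2pos).ne'
    apply dvd_of_fact_le _ _ (Nat.lcm_ne_zero hd1ne hd2ne) hM'ne
    intro p hp
    rw [lcm_fact _ _ hd1ne hd2ne p, div_fact _ _ hg1dvd p, div_fact _ _ hg2dvd p,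
      vM' p hp]
    rw [max_le_iff]
    constructor
    · by_cases hpc : p ∣ c
      · have hnd : ¬ (p:ℤ) ∣ (u*C+D) := hkey1 p hp hpc u
        have hund : u*C+D ≠ 0 := fun h => hnd (h ▸ dvd_zero _)
        have hx1ne : C * (u*C+D) ≠ 0 := mul_ne_zero hC hund
        have hv0 : ((u*C+D).natAbs).factorization p = 0 :=
          Nat.factorization_eq_zero_of_not_dvd (fun hd => hnd ((int_dvd_natAbs p _).mp hd))
        have hw1 : (Int.gcd (C * (u*C+D)) (N:ℤ)).factorization p
            = min (c.factorization p) (N.factorization p) := by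
          rw [gcd_fact _ N hx1ne hN0 p, hvmul _ hund p, hv0]
          simp
        rw [hw1]
        simp only [hpc, if_true]
        exact le_rfl
      · have hcc : c.factorization p = 0 := Nat.factorization_eq_zero_of_not_dvd hpc
        simp only [hpc, if_false]
        by_cases hz : u*C+D = 0
        · have hx10 : C * (u*C+D) = 0 := by rw [hz, mul_zero]
          rw [hx10]
          have hgz : Int.gcd (0:ℤ) ((N:ℤ)) = N := by
            rw [Int.gcd_zero_left, Int.natAbs_natCast]
          rw [hgz]
          omega
        · have hx1ne : C * (u*C+D) ≠ 0 := mul_ne_zero hC hz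
          have hdn : (N / cPart c N) ∣ (u*C+D).natAbs := by
            rw [← Int.natAbs_natCast (N / cPart c N)]
            exact Int.natAbs_dvd_natAbs.mpr hu
          have hle : (N / cPart c N).factorization p
              ≤ ((u*C+D).natAbs).factorization p :=
            Finsupp.le_def.mp ((Nat.factorization_le_iff_dvd hNbarne
              (Int.natAbs_ne_zero.mpr hz)).mpr hdn) p
          rw [hNbarfact p] at hle
          simp only [hpc, if_false, Nat.sub_zero] at hle
          rw [gcd_fact _ N hx1ne hN0 p, hvmul _ hz p, hcc]
          have := hba p
          omega
    · by_cases hpc : p ∣ c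
      · simp only [hpc, if_true]
        have hw2ge : min (c.factorization p) (m.factorization p)
            ≤ (Int.gcd (C * (u*A+B)) (m:ℤ)).factorization p := by
          by_cases hz : u*A+B = 0
          · have hx20 : C * (u*A+B) = 0 := by rw [hz, mul_zero]
            rw [hx20]
            have hgz : Int.gcd (0:ℤ) ((m:ℤ)) = m := by
              rw [Int.gcd_zero_left, Int.natAbs_natCast]
            rw [hgz]
            exact min_le_right _ _
          · have hx2ne : C * (u*A+B) ≠ 0 := mul_ne_zero hC hz
            rw [gcd_fact _ m hx2ne hm0 p, hvmul _ hz p]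
            omega
        have := hba p
        omega
      · simp only [hpc, if_false]
        omega
end

section
/- Let N ≥ 1 and let M be a positive divisor of N. Then the subgroup of SL₂(ℤ) generated by Γ₀(N) together with the matrix (1, 0; M, 1) is equal to Γ₀(M). -/
open CongruenceSubgroup
open scoped MatrixGroups

/-- The matrix `(1, 0; M, 1)` as an element of `SL₂(ℤ)`. -/
def RM (M : ℕ) : SL(2, ℤ) :=
  ⟨!![1, 0; (M : ℤ), 1], by simp [Matrix.det_fin_two_of]⟩

/-- Lower unipotent matrices. -/
def LTM (x : ℤ) : SL(2, ℤ) :=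
  ⟨!![1, 0; x, 1], by simp [Matrix.det_fin_two_of]⟩

/-- Upper unipotent matrices. -/
def UTM (x : ℤ) : SL(2, ℤ) :=
  ⟨!![1, x; 0, 1], by simp [Matrix.det_fin_two_of]⟩

lemma LTM_mul (x y : ℤ) : LTM x * LTM y = LTM (x + y) := by
  apply Subtype.ext
  show (!![1, 0; x, 1] : Matrix (Fin 2) (Fin 2) ℤ) * !![1, 0; y, 1] = _
  rw [Matrix.mul_fin_two]
  norm_num [add_comm]
  rfl

lemma LTM_one : LTM 0 = 1 := by
  apply Subtype.ext
  show (!![1, 0; (0:ℤ), 1] : Matrix (Fin 2) (Fin 2) ℤ) = 1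
  rw [Matrix.one_fin_two]

lemma LTM_inv (x : ℤ) : (LTM x)⁻¹ = LTM (-x) := by
  apply inv_eq_of_mul_eq_one_right
  rw [LTM_mul, add_neg_cancel, LTM_one]

lemma LTM_zpow (x : ℤ) (k : ℤ) : (LTM x) ^ k = LTM (k * x) := by
  induction k using Int.induction_on with
  | zero => rw [zpow_zero, zero_mul, LTM_one]
  | succ n ih => rw [zpow_add_one, ih, LTM_mul]; ring_nf
  | pred n ih => rw [zpow_sub_one, ih, LTM_inv, LTM_mul]; ring_nf

lemma exists_coprime_add_mul (a c : ℤ) (h : IsCoprime a c) (n : ℕ) (hn : 0 < n) :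
    ∃ j : ℤ, IsCoprime (a + j * c) (n : ℤ) := by
  classical
  set s : Finset ℕ := n.primeFactors.filter (fun p => ¬ (p : ℤ) ∣ a) with hs
  refine ⟨∏ p ∈ s, (p : ℤ), ?_⟩
  rw [Int.isCoprime_iff_gcd_eq_one]
  by_contra hg
  have hgdvd : (Int.gcd (a + (∏ p ∈ s, (p : ℤ)) * c) n) ∣ n :=
    Int.natCast_dvd_natCast.mp (Int.gcd_dvd_right _ _)
  obtain ⟨p, hp, hpg⟩ := Nat.exists_prime_and_dvd hg
  have hpZ : Prime (p : ℤ) := Nat.prime_iff_prime_int.mp hp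
  have hpn : p ∣ n := hpg.trans hgdvd
  have hpa' : (p : ℤ) ∣ a + (∏ q ∈ s, (q : ℤ)) * c :=
    (Int.natCast_dvd_natCast.mpr hpg).trans (Int.gcd_dvd_left _ _)
  by_cases hpa : (p : ℤ) ∣ a
  · -- then p ∤ prod and p ∤ c, contradiction
    have hpc : ¬ (p : ℤ) ∣ c := by
      intro hc
      have h1 := h.isUnit_of_dvd' hpa hc
      rw [Int.isUnit_iff] at h1
      have := hp.two_le
      omega
    have hpprod : ¬ (p : ℤ) ∣ ∏ q ∈ s, (q : ℤ) := by
      intro hd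
      obtain ⟨q, hq, hdq⟩ := hpZ.exists_mem_finset_dvd hd
      have hq2 := Finset.mem_filter.mp hq
      have : p = q := (Nat.prime_dvd_prime_iff_eq hp
        (Nat.prime_of_mem_primeFactors hq2.1)).mp (by exact_mod_cast hdq)
      exact hq2.2 (this ▸ hpa)
    have hppc : (p : ℤ) ∣ (∏ q ∈ s, (q : ℤ)) * c := by
      have := dvd_sub hpa' hpa
      simpa using this
    rcases hpZ.dvd_mul.mp hppc with h1 | h1
    · exact hpprod h1
    · exact hpc h1
  · have hps : p ∈ s := Finset.mem_filter.mpr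
      ⟨Nat.mem_primeFactors.mpr ⟨hp, hpn, hn.ne'⟩, hpa⟩
    have hdp : (p : ℤ) ∣ (∏ q ∈ s, (q : ℤ)) * c :=
      Dvd.dvd.mul_right (Finset.dvd_prod_of_mem _ hps) c
    have : (p : ℤ) ∣ a := by
      have := dvd_sub hpa' hdp
      simpa using this
    exact hpa this

/-- Let `M` be a positive divisor of `N ≥ 1`. Then the subgroup of
`SL₂(ℤ)` generated by `Γ₀(N)` together with the matrix `(1, 0; M, 1)` equals `Γ₀(M)`. -/
theorem stmt_15 (N M : ℕ) (hN : 1 ≤ N) (hMpos : 0 < M) (hMdvd : M ∣ N) :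
    Subgroup.closure ((Gamma0 N : Set SL(2, ℤ)) ∪ {RM M}) = Gamma0 M := by
  have hMN : (M : ℤ) ∣ (N : ℤ) := Int.natCast_dvd_natCast.mpr hMdvd
  apply le_antisymm
  · rw [Subgroup.closure_le]
    rintro x (hx | hx)
    · rw [SetLike.mem_coe, Gamma0_mem] at hx ⊢
      rw [ZMod.intCast_zmod_eq_zero_iff_dvd] at hx ⊢
      exact hMN.trans hx
    · rw [Set.mem_singleton_iff] at hx
      subst hx
      rw [SetLike.mem_coe, Gamma0_mem, ZMod.intCast_zmod_eq_zero_iff_dvd]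
      show (M : ℤ) ∣ (RM M : Matrix (Fin 2) (Fin 2) ℤ) 1 0
      simp [RM]
  · intro γ hγ
    set H := Subgroup.closure ((Gamma0 N : Set SL(2, ℤ)) ∪ {RM M}) with hH
    set a : ℤ := (γ : Matrix (Fin 2) (Fin 2) ℤ) 0 0 with ha
    set b : ℤ := (γ : Matrix (Fin 2) (Fin 2) ℤ) 0 1 with hb
    set c : ℤ := (γ : Matrix (Fin 2) (Fin 2) ℤ) 1 0 with hc
    set d : ℤ := (γ : Matrix (Fin 2) (Fin 2) ℤ) 1 1 with hd
    have hdet : a * d - b * c = 1 := by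
      have := γ.2
      rw [Matrix.det_fin_two] at this
      exact this
    have hac : IsCoprime a c := ⟨d, -b, by linarith⟩
    obtain ⟨c₀, hc₀⟩ : (M : ℤ) ∣ c := by
      rw [Gamma0_mem, ZMod.intCast_zmod_eq_zero_iff_dvd] at hγ; exact hγ
    obtain ⟨j, hj⟩ := exists_coprime_add_mul a c hac N hN
    set a' : ℤ := a + j * c with ha'
    set Q : ℕ := N / M with hQ
    have hMQ : (M : ℤ) * Q = N := by
      rw [← Nat.cast_mul, Nat.mul_div_cancel' hMdvd]
    have hQdvd : (Q : ℤ) ∣ (N : ℤ) := ⟨M, by rw [← hMQ]; ring⟩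
    have hjQ : IsCoprime a' (Q : ℤ) := hj.of_isCoprime_of_dvd_right hQdvd
    obtain ⟨u, v, huv⟩ := hjQ
    set k : ℤ := -(c₀ * u) with hk
    have hUT : UTM j ∈ H := by
      apply Subgroup.subset_closure
      left
      rw [SetLike.mem_coe, Gamma0_mem]
      show (((UTM j : Matrix (Fin 2) (Fin 2) ℤ) 1 0 : ℤ) : ZMod N) = 0
      simp [UTM]
    have hLT : ∀ m : ℤ, LTM (m * (M : ℤ)) ∈ H := by
      intro m
      have hRM : RM M ∈ H := Subgroup.subset_closure (Or.inr rfl)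
      have hrfl : RM M = LTM (M : ℤ) := rfl
      rw [hrfl] at hRM
      rw [← LTM_zpow]
      exact zpow_mem hRM m
    set γ' : SL(2, ℤ) := LTM (k * (M : ℤ)) * (UTM j * γ) with hγ'
    have hγ'mem : γ' ∈ Gamma0 N := by
      rw [Gamma0_mem, ZMod.intCast_zmod_eq_zero_iff_dvd]
      have hentry : (γ' : Matrix (Fin 2) (Fin 2) ℤ) 1 0 = k * (M : ℤ) * a' + c := by
        rw [hγ']
        simp only [Matrix.SpecialLinearGroup.coe_mul]
        show ((!![1, 0; k * (M:ℤ), 1] : Matrix (Fin 2) (Fin 2) ℤ) *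
            ((!![1, j; 0, 1] : Matrix (Fin 2) (Fin 2) ℤ) *
              (γ : Matrix (Fin 2) (Fin 2) ℤ))) 1 0 = _
        simp [Matrix.mul_apply, Matrix.vecMul, dotProduct, Fin.sum_univ_two, ← ha, ← hc, ha']
      rw [hentry]
      have heq : k * (M : ℤ) * a' + c = (c₀ * v) * N := by
        rw [← hMQ, hk, hc₀]
        linear_combination (-((M : ℤ) * c₀)) * huv
      rw [heq]
      exact Dvd.intro_left _ rfl
    have hγ'H : γ' ∈ H := Subgroup.subset_closure (Or.inl hγ'mem)
    have hfin : γ = (UTM j)⁻¹ * ((LTM (k * (M : ℤ)))⁻¹ * γ') := by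
      rw [hγ', inv_mul_cancel_left, inv_mul_cancel_left]
    rw [hfin]
    exact mul_mem (inv_mem hUT) (mul_mem (inv_mem (hLT k)) hγ'H)
end

section
/- Let N ≥ 1, k ≥ 2, let s be the largest divisor of 24 such that s² divides N, and let w ∈ {1, −1}. Let f and h be cusp forms of weight k on Γ₀(N) such that: {γ ∈ SL₂(ℤ) : f|_k γ = f} = Γ₀(N) and {γ ∈ SL₂(ℤ) : h|_k γ = h} = Γ₀(N); f|_k W_N = w·f and h|_k W_N = w·h, where (f|_k W_N)(τ) = N^{−k/2} τ^{−k} f(−1/(Nτ)); there is a field automorphism σ of ℂ with a_n(h) = σ(a_n(f)) for all n ≥ 1; and there exists n₀ ≥ 1 coprime to s with a_{n₀}(f) a nonzero rational number. If f|_k g = h for some g ∈ SL₂(ℤ), then h = f and g ∈ Γ₀(N). -/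
open Complex UpperHalfPlane CongruenceSubgroup
open scoped ModularForm MatrixGroups Real

noncomputable section

/-- `f` has the Fourier expansion `Σ_{n ≥ 0} c n · e^{2πinτ/N}`. -/
def HasExpansion (N : ℕ) (f : ℍ → ℂ) (c : ℕ → ℂ) : Prop :=
  ∀ τ : ℍ, HasSum (fun n : ℕ => c n * Complex.exp (2 * Real.pi * Complex.I * n * (τ : ℂ) / N)) (f τ)

/-- `F` is an eigenvector of the Fricke involution `W_N` with eigenvalue `w`:
`N^{−k/2} τ^{−k} F(−1/(Nτ)) = w·F(τ)`. -/
def FrickeEigen (N : ℕ) (k : ℤ) (F : ℍ → ℂ) (w : ℂ) : Prop :=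
  ∀ τ τ' : ℍ, (τ' : ℂ) = -1 / ((N : ℂ) * (τ : ℂ)) →
    (Real.sqrt N : ℂ) ^ (-k) * (τ : ℂ) ^ (-k) * F τ' = w * F τ

/-! ### Auxiliary lemmas -/

section Aux

open Matrix Filter
open scoped ENNReal NNReal Topology

/-- slash action of an `SL(2, ℤ)` matrix, pointwise formula -/
lemma SL_slash_apply (k : ℤ) (γ : SL(2, ℤ)) (f : ℍ → ℂ) (z : ℍ) :
    (f ∣[k] γ) z = f (γ • z) * (((γ 1 0 : ℂ)) * z + (γ 1 1 : ℂ)) ^ (-k) := by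
  rw [ModularForm.SL_slash_apply]
  rfl

lemma SL_smul_coe (γ : SL(2, ℤ)) (z : ℍ) :
    ((γ • z : ℍ) : ℂ) = ((γ 0 0 : ℂ) * z + (γ 0 1 : ℂ)) / ((γ 1 0 : ℂ) * z + (γ 1 1 : ℂ)) := by
  rw [UpperHalfPlane.specialLinearGroup_apply]
  simp [UpperHalfPlane.coe_mk]

lemma conj_lower_left (g M : SL(2, ℤ)) :
    (g * M * g⁻¹) 1 0 = g 1 0 * g 1 1 * (M 0 0 - M 1 1) + g 1 1 ^ 2 * M 1 0
      - g 1 0 ^ 2 * M 0 1 := by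
  rw [Matrix.SpecialLinearGroup.coe_mul, Matrix.SpecialLinearGroup.coe_mul]
  rw [Matrix.mul_apply]
  simp [Matrix.SpecialLinearGroup.SL2_inv_expl, Matrix.SpecialLinearGroup.coe_mul,
    Matrix.mul_apply, Fin.sum_univ_two]
  ring

lemma Gamma0_mem_int {N : ℕ} (A : SL(2, ℤ)) : A ∈ Gamma0 N ↔ (N : ℤ) ∣ A 1 0 := by
  rw [Gamma0_mem, ZMod.intCast_zmod_eq_zero_iff_dvd]

/-- the matrix `T` -/
def Tmat : SL(2, ℤ) := ⟨!![1, 1; 0, 1], by simp [Matrix.det_fin_two_of]⟩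

@[simp] lemma Tmat_00 : Tmat 0 0 = 1 := rfl
@[simp] lemma Tmat_01 : Tmat 0 1 = 1 := rfl
@[simp] lemma Tmat_10 : Tmat 1 0 = 0 := rfl
@[simp] lemma Tmat_11 : Tmat 1 1 = 1 := rfl

lemma Tmat_mem (N : ℕ) : Tmat ∈ Gamma0 N := by
  rw [Gamma0_mem_int]; simp

/-- The lower-triangular unipotent matrix. -/
def Rm (x : ℤ) : SL(2, ℤ) := ⟨!![1, 0; x, 1], by simp [Matrix.det_fin_two_of]⟩

@[simp] lemma Rm_00 (x : ℤ) : Rm x 0 0 = 1 := rfl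
@[simp] lemma Rm_01 (x : ℤ) : Rm x 0 1 = 0 := rfl
@[simp] lemma Rm_10 (x : ℤ) : Rm x 1 0 = x := rfl
@[simp] lemma Rm_11 (x : ℤ) : Rm x 1 1 = 1 := rfl

lemma Rm_mul (x y : ℤ) : Rm x * Rm y = Rm (x + y) := by
  ext i j
  rw [Matrix.SpecialLinearGroup.coe_mul]
  fin_cases i <;> fin_cases j <;>
    simp [Rm, Matrix.SpecialLinearGroup.coe_mul, Matrix.mul_apply, Fin.sum_univ_two]

lemma Rm_zero : Rm 0 = 1 := by
  ext i j
  fin_cases i <;> fin_cases j <;> simp [Rm]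

/-! #### Number theory -/

lemma int_coprime_of_prime_not_dvd {p : ℕ} (hp : p.Prime) {z : ℤ} (h : ¬ (p:ℤ) ∣ z) :
    IsCoprime (p:ℤ) z := by
  rw [Int.isCoprime_iff_gcd_eq_one]
  have h' : ¬ p ∣ z.natAbs := by
    intro hd; exact h (Int.natAbs_dvd_natAbs.mp (by simpa using hd))
  exact (Nat.Prime.coprime_iff_not_dvd hp).mpr h'

lemma claim1 (p : ℕ) (hp : p.Prime) (N : ℕ) (hN : N ≠ 0) (c d : ℤ) (hc : c ≠ 0)
    (hcd : IsCoprime c d)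
    (H : ∀ x : ℤ, IsCoprime x (N : ℤ) → (N : ℤ) ∣ c * d * (x ^ 2 - 1))
    (hu1 : 1 ≤ c.natAbs.factorization p)
    (hue : c.natAbs.factorization p < N.factorization p) :
    N.factorization p - c.natAbs.factorization p ≤ Nat.factorization 24 p := by
  have hcne : c.natAbs ≠ 0 := Int.natAbs_ne_zero.mpr hc
  set e := N.factorization p with he
  set u := c.natAbs.factorization p with hu
  set m := Nat.factorization 24 p with hm
  by_contra hcon
  push_neg at hcon
  have hmδ : m + 1 ≤ e - u := hcon
  have he1 : 1 ≤ e := lt_of_le_of_lt (Nat.zero_le _) hue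
  set N' := ordCompl[p] N with hN'
  have hNsplit : p ^ e * N' = N := Nat.ordProj_mul_ordCompl_eq_self N p
  have hcop : Nat.Coprime (p ^ e) N' := Nat.Coprime.pow_left _ (Nat.coprime_ordCompl hp hN)
  set x₀ : ℕ := if p = 5 then 7 else 5 with hx₀
  obtain ⟨x, hx1, hx2⟩ := Nat.chineseRemainder hcop x₀ 1
  have hpe_dvd : ((p : ℤ)) ^ e ∣ (x₀ : ℤ) - (x : ℤ) := by
    have h := hx1.dvd
    push_cast at h ⊢
    exact h
  have hpx₀ : ¬ (p : ℕ) ∣ x₀ := by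
    rw [hx₀]; split_ifs with h5
    · subst h5; norm_num
    · intro hd; exact h5 ((Nat.prime_dvd_prime_iff_eq hp (by norm_num)).mp hd)
  have hpx : ¬ (p : ℤ) ∣ (x : ℤ) := by
    intro hdvd
    apply hpx₀
    have h1 : (p : ℤ) ∣ (x₀ : ℤ) - x := dvd_trans (dvd_pow_self _ (by omega)) hpe_dvd
    have h2 : (p : ℤ) ∣ (x₀ : ℤ) := by simpa using h1.add hdvd
    exact_mod_cast h2
  have hxN' : IsCoprime ((x : ℤ)) ((N' : ℤ)) := by
    obtain ⟨t, ht⟩ : ((N' : ℤ)) ∣ 1 - (x : ℤ) := by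
      have h := hx2.dvd
      push_cast at h ⊢
      exact h
    exact ⟨1, t, by linarith⟩
  have hxN : IsCoprime ((x : ℤ)) ((N : ℤ)) := by
    have h1 : IsCoprime ((x:ℤ)) (((p:ℤ))^e) :=
      ((int_coprime_of_prime_not_dvd hp hpx).symm).pow_right
    have := h1.mul_right hxN'
    rwa [show ((p:ℤ))^e * (N':ℤ) = (N:ℤ) by exact_mod_cast congrArg (Nat.cast : ℕ → ℤ) hNsplit]
      at this
  have hpe : ((p:ℤ))^e ∣ c * d * ((x:ℤ)^2 - 1) := by
    refine dvd_trans ?_ (H _ hxN)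
    have : ((p:ℕ))^e ∣ N := Nat.ordProj_dvd N p
    exact_mod_cast Int.natCast_dvd_natCast.mpr this
  obtain ⟨c₁, hc₁⟩ : ((p:ℤ))^u ∣ c := by
    have h1 : (p:ℕ)^u ∣ c.natAbs := Nat.ordProj_dvd _ _
    exact Int.dvd_natAbs.mp (by exact_mod_cast h1)
  have hpc₁ : ¬ (p:ℤ) ∣ c₁ := by
    intro hd
    obtain ⟨t, ht⟩ := hd
    have hceq : c = ((p:ℤ))^(u+1) * t := by rw [hc₁, ht]; ring
    have hdc : ((p:ℤ))^(u+1) ∣ c := ⟨t, hceq⟩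
    have hnat : ((p:ℕ))^(u+1) ∣ c.natAbs := by
      have h2 := Int.natAbs_dvd_natAbs.mpr hdc
      simpa [Int.natAbs_pow] using h2
    exact Nat.pow_succ_factorization_not_dvd hcne hp hnat
  have hpd : ¬ (p:ℤ) ∣ d := by
    intro hd
    have hpc : (p:ℤ) ∣ c := by
      rw [hc₁]; exact dvd_mul_of_dvd_left (dvd_pow_self _ (by omega)) _
    have hunit := IsCoprime.isUnit_of_dvd' hcd hpc hd
    rw [Int.isUnit_iff] at hunit
    have := hp.two_le
    rcases hunit with h | h <;> omega
  have hδ : ((p:ℤ))^(e-u) ∣ c₁ * d * ((x:ℤ)^2 - 1) := by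
    have h2 : ((p:ℤ))^u * ((p:ℤ))^(e-u) = ((p:ℤ))^e := by
      rw [← pow_add]; congr 1; omega
    rw [← h2, hc₁, show ((p:ℤ))^u * c₁ * d * ((x:ℤ)^2-1)
        = ((p:ℤ))^u * (c₁ * d * ((x:ℤ)^2-1)) by ring] at hpe
    have hp0 : ((p:ℤ))^u ≠ 0 := pow_ne_zero _ (by exact_mod_cast hp.ne_zero)
    exact (mul_dvd_mul_iff_left hp0).mp hpe
  have hcop2 : IsCoprime (((p:ℤ))^(e-u)) (c₁ * d) :=
    (((int_coprime_of_prime_not_dvd hp hpc₁).mul_right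
      (int_coprime_of_prime_not_dvd hp hpd))).pow_left
  have hfin : ((p:ℤ))^(e-u) ∣ (x:ℤ)^2 - 1 := by
    refine hcop2.dvd_of_dvd_mul_left ?_
    exact hδ
  have h24 : ((p:ℤ))^(m+1) ∣ (x:ℤ)^2 - 1 := dvd_trans (pow_dvd_pow _ hmδ) hfin
  have hx₀2 : ((p:ℤ))^(m+1) ∣ (x₀:ℤ)^2 - 1 := by
    have h1 : ((p:ℤ))^(m+1) ∣ (x₀:ℤ) - x :=
      dvd_trans (pow_dvd_pow _ (le_trans hmδ (Nat.sub_le _ _))) hpe_dvd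
    have h2 : ((p:ℤ))^(m+1) ∣ (x₀:ℤ)^2 - (x:ℤ)^2 := by
      rw [show (x₀:ℤ)^2 - (x:ℤ)^2 = ((x₀:ℤ) - x) * ((x₀:ℤ) + x) by ring]
      exact h1.mul_right _
    have h3 : (x₀:ℤ)^2 - 1 = ((x₀:ℤ)^2 - (x:ℤ)^2) + ((x:ℤ)^2 - 1) := by ring
    rw [h3]; exact h2.add h24
  by_cases h5 : p = 5
  · subst h5
    rw [hx₀] at hx₀2; norm_num at hx₀2
    have : (5:ℤ) ∣ 48 := dvd_trans (dvd_pow_self _ (Nat.succ_ne_zero m)) hx₀2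
    norm_num at this
  · rw [hx₀, if_neg h5] at hx₀2
    norm_num at hx₀2
    have hnat : (p:ℕ)^(m+1) ∣ 24 := by
      have : ((p:ℤ))^(m+1) ∣ (24:ℤ) := hx₀2
      exact_mod_cast this
    exact Nat.pow_succ_factorization_not_dvd (by norm_num) hp hnat

lemma NT_main (N s : ℕ) (hN : N ≠ 0) (hs24 : s ∣ 24) (hs2 : s ^ 2 ∣ N)
    (hsmax : ∀ t : ℕ, t ∣ 24 → t ^ 2 ∣ N → t ≤ s) (c d : ℤ) (hcd : IsCoprime c d)
    (hc2 : (N : ℤ) ∣ c ^ 2)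
    (H : ∀ x : ℤ, IsCoprime x (N : ℤ) → (N : ℤ) ∣ c * d * (x ^ 2 - 1)) :
    (N : ℤ) ∣ (s : ℤ) * c := by
  rcases eq_or_ne c 0 with rfl | hc
  · simp
  have hs0 : s ≠ 0 := by
    rintro rfl
    rw [zero_pow (by norm_num)] at hs2
    exact hN (zero_dvd_iff.mp hs2)
  have hcne : c.natAbs ≠ 0 := Int.natAbs_ne_zero.mpr hc
  set C := c.natAbs with hC
  suffices hnat : N ∣ s * C by
    refine Int.dvd_natAbs.mp ?_
    rw [show ((s:ℤ) * c).natAbs = s * C by rw [Int.natAbs_mul]; simp [hC]]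
    exact_mod_cast hnat
  have hNC2 : N ∣ C ^ 2 := by
    have h := Int.natAbs_dvd_natAbs.mpr hc2
    simpa [Int.natAbs_pow] using h
  rw [← Nat.factorization_le_iff_dvd hN (mul_ne_zero hs0 hcne), Finsupp.le_def]
  intro p
  by_cases hp : p.Prime
  swap
  · simp [Nat.factorization_eq_zero_of_not_prime _ hp]
  rw [Nat.factorization_mul hs0 hcne, Finsupp.add_apply]
  set e := N.factorization p with he
  set u := C.factorization p with hu
  set v := s.factorization p with hv
  have he2u : e ≤ 2 * u := by
    have h1 : p ^ e ∣ C ^ 2 := (Nat.ordProj_dvd N p).trans hNC2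
    have h2 := (Nat.Prime.pow_dvd_iff_le_factorization hp (pow_ne_zero 2 hcne)).mp h1
    rwa [Nat.factorization_pow, Finsupp.smul_apply, smul_eq_mul] at h2
  by_cases hcase : e ≤ u
  · omega
  push_neg at hcase
  have hu1 : 1 ≤ u := by omega
  have hδm := claim1 p hp N hN c d hc hcd H hu1 hcase
  set m24 := Nat.factorization 24 p with hm24
  set δ := e - u with hδ
  set β := max v δ with hβ
  set s' := p ^ β * ordCompl[p] s with hs'
  have hs'0 : s' ≠ 0 := mul_ne_zero (pow_ne_zero _ hp.ne_zero) (Nat.ordCompl_pos p hs0).ne'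
  have hvm : v ≤ m24 :=
    (Nat.Prime.pow_dvd_iff_le_factorization hp (by norm_num)).mp
      ((Nat.ordProj_dvd s p).trans hs24)
  have h2v : 2 * v ≤ e := by
    have h1 : p ^ (2 * v) ∣ N := by
      refine dvd_trans ?_ hs2
      rw [two_mul, pow_add]
      exact mul_dvd_mul (Nat.ordProj_dvd s p) (Nat.ordProj_dvd s p) |>.trans (by rw [← sq])
    exact (Nat.Prime.pow_dvd_iff_le_factorization hp hN).mp h1
  have hβ2 : β * 2 ≤ e := by
    rcases le_total v δ with hle | hle
    · rw [hβ, max_eq_right hle]; omega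
    · rw [hβ, max_eq_left hle]; omega
  have hs'24 : s' ∣ 24 := by
    refine Nat.Coprime.mul_dvd_of_dvd_of_dvd ?_ ?_ ?_
    · exact Nat.Coprime.pow_left _ (Nat.coprime_ordCompl hp hs0)
    · exact (Nat.Prime.pow_dvd_iff_le_factorization hp (by norm_num)).mpr (max_le hvm hδm)
    · exact (Nat.ordCompl_dvd s p).trans hs24
  have hs'2 : s' ^ 2 ∣ N := by
    rw [mul_pow, ← pow_mul]
    refine Nat.Coprime.mul_dvd_of_dvd_of_dvd ?_ ?_ ?_
    · exact Nat.Coprime.pow_left _ ((Nat.coprime_ordCompl hp hs0).pow_right _)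
    · exact (Nat.Prime.pow_dvd_iff_le_factorization hp hN).mpr hβ2
    · exact dvd_trans (pow_dvd_pow_of_dvd (Nat.ordCompl_dvd s p) 2) hs2
  have hle := hsmax s' hs'24 hs'2
  have hss' : s ∣ s' := by
    conv_lhs => rw [← Nat.ordProj_mul_ordCompl_eq_self s p]
    exact mul_dvd_mul (pow_dvd_pow p (le_max_left _ _)) dvd_rfl
  have heq : s' = s := le_antisymm hle (Nat.le_of_dvd (Nat.pos_of_ne_zero hs'0) hss')
  have hps : p ^ β ∣ s := heq ▸ dvd_mul_right _ _
  have hβv : β ≤ v := (Nat.Prime.pow_dvd_iff_le_factorization hp hs0).mp hps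
  have hδv : δ ≤ v := le_trans (le_max_right v δ) hβv
  omega

/-! #### Power series coefficient uniqueness -/

lemma coeff_unique (a b : ℕ → ℂ)
    (hab : ∀ z : ℂ, z ≠ 0 → ‖z‖ < 1 →
      ∃ L, HasSum (fun n => a n * z ^ n) L ∧ HasSum (fun n => b n * z ^ n) L) :
    a = b := by
  set p := FormalMultilinearSeries.ofScalars ℂ a with hp
  set q := FormalMultilinearSeries.ofScalars ℂ b with hq
  have hsum : ∀ (c : ℕ → ℂ) (z : ℂ) (L : ℂ), HasSum (fun n => c n * z ^ n) L →
      (FormalMultilinearSeries.ofScalars ℂ c).sum z = L := by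
    intro c z L hL
    rw [FormalMultilinearSeries.sum]
    have : (fun n => (FormalMultilinearSeries.ofScalars ℂ c) n fun _ => z)
        = fun n => c n * z ^ n := by
      ext n
      rw [FormalMultilinearSeries.ofScalars_apply_eq, smul_eq_mul]
    rw [this, hL.tsum_eq]
  have hrad : ∀ (c : ℕ → ℂ), (∀ z : ℂ, z ≠ 0 → ‖z‖ < 1 →
      ∃ L, HasSum (fun n => c n * z ^ n) L) →
      (0 : ℝ≥0∞) < (FormalMultilinearSeries.ofScalars ℂ c).radius := by
    intro c hc
    obtain ⟨L, hL⟩ := hc (1/2 : ℂ) (by norm_num) (by norm_num)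
    have htend : Tendsto (fun n => c n * (1/2 : ℂ) ^ n) atTop (𝓝 0) :=
      hL.summable.tendsto_atTop_zero
    have hO : (fun n => ‖(FormalMultilinearSeries.ofScalars ℂ c) n‖ * ((1/2 : NNReal) : ℝ) ^ n)
        =O[atTop] (fun _ => (1 : ℝ)) := by
      have : (fun n => ‖(FormalMultilinearSeries.ofScalars ℂ c) n‖ * ((1/2 : NNReal) : ℝ) ^ n)
          = fun n => ‖c n * (1/2 : ℂ) ^ n‖ := by
        ext n
        rw [FormalMultilinearSeries.ofScalars_norm]
        simp [norm_mul, norm_pow]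
      rw [this]
      exact (htend.norm.isBigO_one ℝ)
    calc (0 : ℝ≥0∞) < ((1/2 : NNReal) : ℝ≥0∞) := by norm_num
    _ ≤ _ := FormalMultilinearSeries.le_radius_of_isBigO _ hO
  have hpb : HasFPowerSeriesAt p.sum p 0 :=
    (p.hasFPowerSeriesOnBall
      (hrad a (fun z h1 h2 => ⟨_, (hab z h1 h2).choose_spec.1⟩))).hasFPowerSeriesAt
  have hqb : HasFPowerSeriesAt q.sum q 0 :=
    (q.hasFPowerSeriesOnBall
      (hrad b (fun z h1 h2 => ⟨_, (hab z h1 h2).choose_spec.2⟩))).hasFPowerSeriesAt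
  have hpq : ∀ z : ℂ, z ≠ 0 → ‖z‖ < 1 → p.sum z = q.sum z := by
    intro z h1 h2
    obtain ⟨L, hL1, hL2⟩ := hab z h1 h2
    rw [hsum a z L hL1, hsum b z L hL2]
  have hev : p.sum =ᶠ[𝓝[≠] (0:ℂ)] q.sum := by
    have hball : Metric.ball (0:ℂ) 1 ∈ 𝓝[≠] (0:ℂ) :=
      nhdsWithin_le_nhds (Metric.ball_mem_nhds 0 one_pos)
    filter_upwards [hball, self_mem_nhdsWithin] with z hz hz0
    exact hpq z hz0 (by simpa [Complex.dist_eq] using hz)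
  have h0 : p.sum 0 = q.sum 0 := by
    have t1 : Tendsto p.sum (𝓝[≠] (0:ℂ)) (𝓝 (p.sum 0)) :=
      hpb.continuousAt.continuousWithinAt
    have t2 : Tendsto p.sum (𝓝[≠] (0:ℂ)) (𝓝 (q.sum 0)) := by
      refine Tendsto.congr' hev.symm ?_
      exact hqb.continuousAt.continuousWithinAt
    exact tendsto_nhds_unique t1 t2
  have hev' : ∀ᶠ z in 𝓝 (0:ℂ), p.sum z = q.sum z := by
    filter_upwards [Metric.ball_mem_nhds (0:ℂ) one_pos] with z hz
    rcases eq_or_ne z 0 with rfl | hz0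
    · exact h0
    · exact hpq z hz0 (by simpa [Complex.dist_eq] using hz)
  have := hpb.eq_formalMultilinearSeries_of_eventually hqb hev'
  rwa [hp, hq, FormalMultilinearSeries.ofScalars_series_eq_iff] at this

lemma exists_tau (z : ℂ) (hz : z ≠ 0) (h1 : ‖z‖ < 1) :
    ∃ τ : ℍ, Complex.exp (2 * (Real.pi : ℂ) * Complex.I * (τ : ℂ)) = z := by
  have h2πI : (2 * (Real.pi : ℂ) * Complex.I) ≠ 0 := by
    simp [Real.pi_ne_zero, Complex.I_ne_zero]
  have him : 0 < (Complex.log z / (2 * (Real.pi : ℂ) * Complex.I)).im := by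
    have habs : ‖z‖ < 1 := h1
    have habs0 : 0 < ‖z‖ := by
      simpa [norm_pos_iff] using hz
    have hlog : Real.log ‖z‖ < 0 := Real.log_neg habs0 habs
    have heq : Complex.log z / (2 * (Real.pi : ℂ) * Complex.I)
        = Complex.log z * (((2 * Real.pi)⁻¹ : ℝ) : ℂ) * (-Complex.I) := by
      have hπ : ((Real.pi : ℂ)) ≠ 0 := by exact_mod_cast Real.pi_ne_zero
      rw [div_eq_iff h2πI]
      push_cast
      rw [show Complex.log z * (2*(Real.pi:ℂ))⁻¹ * -Complex.I * (2*(Real.pi:ℂ)*Complex.I)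
          = Complex.log z * ((2*(Real.pi:ℂ)) * (2*(Real.pi:ℂ))⁻¹) * (-(Complex.I^2)) by ring,
        Complex.I_sq, mul_inv_cancel₀ (by norm_num [hπ] : (2*(Real.pi:ℂ)) ≠ 0)]
      ring
    rw [heq]
    simp only [mul_assoc, Complex.mul_im, Complex.mul_re, Complex.ofReal_re, Complex.ofReal_im,
      Complex.neg_re, Complex.neg_im, Complex.I_re, Complex.I_im, Complex.log_re]
    have hpos : 0 < (2 * Real.pi)⁻¹ := by positivity
    nlinarith [hlog, hpos]
  refine ⟨⟨Complex.log z / (2 * (Real.pi : ℂ) * Complex.I), him⟩, ?_⟩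
  show Complex.exp (2 * (Real.pi:ℂ) * Complex.I *
    (Complex.log z / (2 * (Real.pi:ℂ) * Complex.I))) = z
  rw [mul_div_cancel₀ _ h2πI]
  exact Complex.exp_log hz

lemma expansion_unique (a b : ℕ → ℂ)
    (ha : ∀ τ : ℍ, ∃ L,
      HasSum (fun n : ℕ => a n * Complex.exp (2 * (Real.pi:ℂ) * Complex.I * (τ:ℂ)) ^ n) L ∧
      HasSum (fun n : ℕ => b n * Complex.exp (2 * (Real.pi:ℂ) * Complex.I * (τ:ℂ)) ^ n) L) :
    a = b := by
  apply coeff_unique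
  intro z hz h1
  obtain ⟨τ, hτ⟩ := exists_tau z hz h1
  obtain ⟨L, h2, h3⟩ := ha τ
  rw [hτ] at h2 h3
  exact ⟨L, h2, h3⟩

/-! #### Fricke translation -/

lemma fricke_translate (N : ℕ) (hN : 1 ≤ N) (k : ℤ) (w : ℂ) (hw0 : w ≠ 0)
    (f h : ℍ → ℂ) (hfW : FrickeEigen N k f w) (hhW : FrickeEigen N k h w)
    (M : ℤ) (hslash : (f ∣[k] (Rm M)) = h) (τ : ℍ) :
    h τ = f ((-(M : ℝ)/(N : ℝ)) +ᵥ τ) := by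
  have hN0 : (N : ℂ) ≠ 0 := Nat.cast_ne_zero.mpr (by omega)
  have hτ0 : (τ : ℂ) ≠ 0 := UpperHalfPlane.ne_zero τ
  set τ' : ℍ := ⟨-1 / ((N : ℂ) * τ), by
    rw [neg_div, div_eq_mul_inv, one_mul, Complex.neg_im, Complex.inv_im]
    have him : ((N : ℂ) * τ).im = N * τ.im := by
      simp [Complex.mul_im]
    have hpos : 0 < Complex.normSq ((N:ℂ) * τ) :=
      Complex.normSq_pos.mpr (mul_ne_zero hN0 hτ0)
    rw [him]
    have := τ.im_pos
    have hNpos : (0:ℝ) < N := by exact_mod_cast (by omega : 0 < N)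
    rw [neg_div, neg_neg]
    positivity⟩ with hτ'
  have hτ'c : (τ' : ℂ) = -1 / ((N : ℂ) * τ) := rfl
  set τ₂ : ℍ := (-(M : ℝ)/(N : ℝ)) +ᵥ τ with hτ₂
  have hτ₂c : (τ₂ : ℂ) = (τ : ℂ) - (M : ℂ)/(N : ℂ) := by
    rw [hτ₂, UpperHalfPlane.coe_vadd]
    push_cast
    ring
  have hτ₂0 : (τ₂ : ℂ) ≠ 0 := UpperHalfPlane.ne_zero τ₂
  have hden : (M : ℂ) * τ' + 1 = (τ₂ : ℂ) / τ := by
    rw [hτ'c, hτ₂c]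
    field_simp
    ring
  have hden0 : (M : ℂ) * τ' + 1 ≠ 0 := by
    rw [hden]
    exact div_ne_zero hτ₂0 hτ0
  have hsmul : ((Rm M • τ' : ℍ) : ℂ) = -1 / ((N : ℂ) * τ₂) := by
    rw [SL_smul_coe]
    simp only [Rm_00, Rm_01, Rm_10, Rm_11, Int.cast_one, Int.cast_zero, one_mul, add_zero]
    rw [div_eq_div_iff hden0 (mul_ne_zero hN0 hτ₂0)]
    rw [hτ'c, hτ₂c]
    field_simp
    ring
  have hfe := hfW τ₂ (Rm M • τ') hsmul
  have hhe := hhW τ τ' hτ'c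
  have hval : h τ' = f (Rm M • τ') * ((M : ℂ) * τ' + 1) ^ (-k) := by
    rw [← hslash, SL_slash_apply]
    norm_num
  have e1 : ((M:ℂ) * τ' + 1) ^ (-k) = (τ₂:ℂ) ^ (-k) * ((τ:ℂ)) ^ k := by
    rw [hden, div_eq_mul_inv, mul_zpow, _root_.inv_zpow', neg_neg]
  have key : w * h τ = w * f τ₂ := by
    calc w * h τ = (Real.sqrt N : ℂ) ^ (-k) * (τ : ℂ) ^ (-k) * h τ' := hhe.symm
    _ = ((Real.sqrt N : ℂ) ^ (-k) * (τ₂ : ℂ) ^ (-k) * f (Rm M • τ'))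
        * ((τ:ℂ) ^ (-k) * (τ:ℂ) ^ k) := by
        rw [hval, e1]; ring
    _ = (w * f τ₂) * 1 := by
        rw [hfe, _root_.zpow_neg, inv_mul_cancel₀ (zpow_ne_zero k hτ0)]
    _ = w * f τ₂ := mul_one _
  exact mul_left_cancel₀ hw0 key

end Aux

/-- Let `s` be the largest divisor of `24` with `s² ∣ N`, `w ∈ {±1}`, and
let `f, h` be cusp forms of weight `k ≥ 2` on `Γ₀(N)` whose stabilisers in `SL₂(ℤ)` equal
`Γ₀(N)`, which are `W_N`-eigenvectors with the same eigenvalue `w`, whose coefficients are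
related by a field automorphism `σ` of `ℂ`, and such that `a_{n₀}(f)` is a nonzero rational
for some `n₀` coprime to `s`. If `f|_k g = h` for some `g ∈ SL₂(ℤ)`, then `h = f` and
`g ∈ Γ₀(N)`. -/
theorem stmt_16 (N : ℕ) (hN : 1 ≤ N) (k : ℤ) (hk : 2 ≤ k)
    (s : ℕ) (hs24 : s ∣ 24) (hs2 : s ^ 2 ∣ N)
    (hsmax : ∀ t : ℕ, t ∣ 24 → t ^ 2 ∣ N → t ≤ s)
    (w : ℂ) (hw : w = 1 ∨ w = -1)
    (f h : CuspForm (Gamma0 N) k)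
    (hstabf : ∀ γ : SL(2, ℤ), ⇑f ∣[k] γ = ⇑f ↔ γ ∈ Gamma0 N)
    (hstabh : ∀ γ : SL(2, ℤ), ⇑h ∣[k] γ = ⇑h ↔ γ ∈ Gamma0 N)
    (hfW : FrickeEigen N k (⇑f) w) (hhW : FrickeEigen N k (⇑h) w)
    (cf ch : ℕ → ℂ)
    (hcf : HasExpansion 1 (⇑f) cf) (hch : HasExpansion 1 (⇑h) ch)
    (σ : ℂ ≃+* ℂ) (hσ : ∀ n : ℕ, 1 ≤ n → ch n = σ (cf n))
    (n₀ : ℕ) (hn₀ : 1 ≤ n₀) (hn₀s : Nat.Coprime n₀ s)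
    (hrat : ∃ q : ℚ, q ≠ 0 ∧ cf n₀ = (q : ℂ)) :
    ∀ g : SL(2, ℤ), ⇑f ∣[k] g = ⇑h → h = f ∧ g ∈ Gamma0 N := by
  intro g hfg
  have hN0 : N ≠ 0 := by omega
  have hs1 : 1 ≤ s := hsmax 1 (by norm_num) (by simpa using (one_dvd N))
  have hs0 : (s:ℤ) ≠ 0 := by
    exact_mod_cast (by omega : s ≠ 0)
  have hsN : s ∣ N := dvd_trans (dvd_pow_self s (two_ne_zero)) hs2
  set m : ℕ := N / s with hm
  have hms : m * s = N := Nat.div_mul_cancel hsN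
  have hm0 : (m:ℤ) ≠ 0 := by
    have : m ≠ 0 := by
      intro h0
      rw [h0, zero_mul] at hms
      omega
    exact_mod_cast this
  have hNz : (N:ℤ) = (m:ℤ) * (s:ℤ) := by exact_mod_cast hms.symm
  have hsm : s ∣ m := by
    have h2 : s * s ∣ m * s := by
      rw [hms, ← sq]
      exact hs2
    exact (Nat.mul_dvd_mul_iff_right (by omega : 0 < s)).mp h2
  set a := g 0 0 with ha
  set b := g 0 1 with hb
  set c := g 1 0 with hc
  set d := g 1 1 with hd
  have hdet : a * d - b * c = 1 := by
    have hdet' := g.property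
    rw [Matrix.det_fin_two] at hdet'
    exact hdet'
  have hw0 : w ≠ 0 := by rcases hw with rfl | rfl <;> norm_num
  have hcd : IsCoprime c d := ⟨-b, a, by linarith⟩
  have hfinv : ⇑h ∣[k] g⁻¹ = ⇑f := by
    rw [← hfg, ← SlashAction.slash_mul, mul_inv_cancel, SlashAction.slash_one]
  have hconj : ∀ M : SL(2,ℤ), M ∈ Gamma0 N → g * M * g⁻¹ ∈ Gamma0 N := by
    intro M hM
    rw [← hstabf]
    rw [SlashAction.slash_mul, SlashAction.slash_mul, hfg, (hstabh M).mpr hM, hfinv]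
  have hc2 : (N:ℤ) ∣ c^2 := by
    have hmem := hconj Tmat (Tmat_mem N)
    rw [Gamma0_mem_int, conj_lower_left] at hmem
    simp only [Tmat_00, Tmat_01, Tmat_10, Tmat_11] at hmem
    rw [show c*d*(1-1) + d^2*0 - c^2*1 = -(c^2) by ring] at hmem
    exact dvd_neg.mp hmem
  have H : ∀ x : ℤ, IsCoprime x (N:ℤ) → (N:ℤ) ∣ c*d*(x^2-1) := by
    intro x hx
    obtain ⟨u, v, huv⟩ := hx
    set M : SL(2,ℤ) := ⟨!![x, -v; (N:ℤ), u], by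
      rw [Matrix.det_fin_two_of]; linarith⟩ with hM
    have hM00 : M 0 0 = x := rfl
    have hM01 : M 0 1 = -v := rfl
    have hM10 : M 1 0 = (N:ℤ) := rfl
    have hM11 : M 1 1 = u := rfl
    have hMmem : M ∈ Gamma0 N := by
      rw [Gamma0_mem_int, hM10]
    have hmem := hconj M hMmem
    rw [Gamma0_mem_int, conj_lower_left, hM00, hM01, hM10, hM11] at hmem
    have h1 : (N:ℤ) ∣ c*d*(x - u) := by
      rw [show c*d*(x-u) = (c*d*(x-u) + d^2*(N:ℤ) - c^2*(-v)) - d^2*(N:ℤ) - c^2*v by ring]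
      exact ((hmem.sub ⟨d^2, by ring⟩).sub (hc2.mul_right v))
    have h2 : x*u - 1 = -(v*(N:ℤ)) := by linarith
    rw [show c*d*(x^2-1) = x*(c*d*(x-u)) + c*d*(x*u-1) by ring, h2]
    exact dvd_add (h1.mul_left x) ⟨-(c*d*v), by ring⟩
  obtain ⟨t, ht⟩ := NT_main N s hN0 hs24 hs2 hsmax c d hcd hc2 H
  set j : ℤ := t * d with hj
  set Mz : ℤ := j * (m:ℤ) with hMz
  have hcm : c = (m:ℤ) * t := by
    apply mul_left_cancel₀ hs0
    rw [ht, hNz]; ring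
  obtain ⟨r, hr⟩ : (s:ℤ) ∣ (m:ℤ) := Int.natCast_dvd_natCast.mpr hsm
  have hst : (s:ℤ) ∣ (t - j*a) := by
    have h' : t - j*a = -t*(a*d - 1) := by rw [hj]; ring
    have h'' : a*d - 1 = b*c := by linarith
    rw [h', h'', hcm, hr]
    exact ⟨-(t*b*r*t), by ring⟩
  have hγmem : Rm (-Mz) * g ∈ Gamma0 N := by
    rw [Gamma0_mem_int]
    have hentry : (Rm (-Mz) * g) 1 0 = -Mz * a + c := by
      rw [Matrix.SpecialLinearGroup.coe_mul]
      simp [Rm, Matrix.SpecialLinearGroup.coe_mul, Matrix.mul_apply, Fin.sum_univ_two, ha, hc]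
    rw [hentry]
    obtain ⟨e, he⟩ := hst
    refine ⟨e, ?_⟩
    rw [hMz, hcm, hNz]
    linear_combination (m:ℤ) * he
  have hgfact : g = Rm Mz * (Rm (-Mz) * g) := by
    rw [← mul_assoc, Rm_mul, add_neg_cancel, Rm_zero, one_mul]
  have hslash2 : ⇑f ∣[k] (Rm Mz) = ⇑h := by
    have h1 : (⇑f ∣[k] (Rm Mz)) ∣[k] (Rm (-Mz) * g) = ⇑h := by
      rw [← SlashAction.slash_mul, ← hgfact, hfg]
    have h2 := congrArg (fun F => F ∣[k] (Rm (-Mz) * g)⁻¹) h1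
    rw [← SlashAction.slash_mul, mul_inv_cancel, SlashAction.slash_one] at h2
    rw [(hstabh _).mpr (inv_mem hγmem)] at h2
    exact h2
  have htrans : ∀ τ : ℍ, h τ = f ((-(Mz : ℝ)/(N : ℝ)) +ᵥ τ) :=
    fricke_translate N hN k w hw0 (⇑f) (⇑h) hfW hhW Mz hslash2
  set μ : ℝ := -(Mz:ℝ)/(N:ℝ) with hμ
  set B : ℕ → ℂ := fun n => cf n * Complex.exp (2*(Real.pi:ℂ)*Complex.I*(n:ℂ)*(μ:ℂ)) with hB
  have hcoeff : ch = B := by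
    apply expansion_unique
    intro τ
    refine ⟨h τ, ?_, ?_⟩
    · have h1 := hch τ
      have e1 : (fun n : ℕ => ch n * Complex.exp (2*(Real.pi:ℂ)*Complex.I*(τ:ℂ)) ^ n)
          = fun n : ℕ => ch n * Complex.exp (2 * Real.pi * Complex.I * n * (τ : ℂ) / ((1:ℕ):ℂ)) := by
        funext n
        congr 1
        rw [← Complex.exp_nat_mul]
        congr 1
        push_cast
        ring
      rw [e1]
      exact h1
    · have h2 := hcf (μ +ᵥ τ)
      rw [← htrans τ] at h2
      have e2 : (fun n : ℕ => B n * Complex.exp (2*(Real.pi:ℂ)*Complex.I*(τ:ℂ)) ^ n)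
          = fun n : ℕ => cf n *
              Complex.exp (2 * Real.pi * Complex.I * n * (((μ +ᵥ τ) : ℍ) : ℂ) / ((1:ℕ):ℂ)) := by
        funext n
        rw [hB]
        simp only
        rw [UpperHalfPlane.coe_vadd, Nat.cast_one, div_one,
          show 2 * (Real.pi:ℂ) * Complex.I * (n:ℂ) * ((μ:ℂ) + (τ:ℂ))
            = (2*(Real.pi:ℂ)*Complex.I*(n:ℂ)*(μ:ℂ)) + (n:ℂ)*(2*(Real.pi:ℂ)*Complex.I*(τ:ℂ)) by
              ring,
          Complex.exp_add, Complex.exp_nat_mul]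
        ring
      rw [e2]
      exact h2
  obtain ⟨q, hq0, hq⟩ := hrat
  have hcf0 : cf n₀ ≠ 0 := by
    rw [hq]
    exact_mod_cast (Rat.cast_ne_zero (α := ℂ)).mpr hq0
  have hch0 : ch n₀ = cf n₀ := by
    rw [hσ n₀ hn₀, hq, map_ratCast]
  have hexp1 : Complex.exp (2*(Real.pi:ℂ)*Complex.I*(n₀:ℂ)*(μ:ℂ)) = 1 := by
    have h2 : cf n₀ * Complex.exp (2*(Real.pi:ℂ)*Complex.I*(n₀:ℂ)*(μ:ℂ)) = cf n₀ * 1 := by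
      rw [mul_one,
        show cf n₀ * Complex.exp (2*(Real.pi:ℂ)*Complex.I*(n₀:ℂ)*(μ:ℂ)) = B n₀ from rfl,
        ← hcoeff, hch0]
    exact mul_left_cancel₀ hcf0 h2
  have h2πI0 : (2*(Real.pi:ℂ)*Complex.I) ≠ 0 := by
    simp [Real.pi_ne_zero, Complex.I_ne_zero]
  have hdvd : (N:ℤ) ∣ (n₀:ℤ) * Mz := by
    rw [Complex.exp_eq_one_iff] at hexp1
    obtain ⟨nn, hnn⟩ := hexp1
    have h3 : (n₀:ℂ) * (μ:ℂ) = nn := by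
      apply mul_right_cancel₀ h2πI0
      rw [← hnn]; ring
    have h4 : (n₀:ℂ) * (-(Mz:ℂ)) = (nn:ℂ) * (N:ℂ) := by
      have hNc : (N:ℂ) ≠ 0 := Nat.cast_ne_zero.mpr hN0
      have : (μ:ℂ) = -(Mz:ℂ)/(N:ℂ) := by rw [hμ]; push_cast; ring
      rw [this] at h3
      field_simp at h3
      linear_combination h3
    have h5 : (n₀:ℤ) * (-Mz) = nn * (N:ℤ) := by exact_mod_cast h4
    exact ⟨-nn, by linarith⟩
  have hsj : (s:ℤ) ∣ j := by
    have h6 : (m:ℤ)*(s:ℤ) ∣ (m:ℤ)*((n₀:ℤ)*j) := by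
      rw [← hNz]
      rw [show (m:ℤ)*((n₀:ℤ)*j) = (n₀:ℤ) * Mz by rw [hMz]; ring]
      exact hdvd
    have h7 : (s:ℤ) ∣ (n₀:ℤ)*j := (mul_dvd_mul_iff_left hm0).mp h6
    have h8 : IsCoprime ((s:ℤ)) ((n₀:ℤ)) := (Nat.isCoprime_iff_coprime.mpr hn₀s).symm
    exact h8.dvd_of_dvd_mul_left h7
  have h9 : (N:ℤ) ∣ Mz := by
    obtain ⟨e, he⟩ := hsj
    refine ⟨e, ?_⟩
    rw [hMz, he, hNz]
    ring
  have hRmem : Rm Mz ∈ Gamma0 N := by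
    rw [Gamma0_mem_int]
    simpa using h9
  have hgmem : g ∈ Gamma0 N := by
    rw [hgfact]
    exact mul_mem hRmem hγmem
  have hfeq : ⇑h = ⇑f := by rw [← hslash2, (hstabf _).mpr hRmem]
  exact ⟨DFunLike.coe_injective hfeq, hgmem⟩
end
end
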